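/- Let μ be a partition that is not a hook (equivalently, the Ferrers diagram of μ contains the cell (2,2)), and let ℓ ≥ 1. Then the signed sum Σ_T sgn(T) over all special rim hook tabloids T of shape μ having exactly ℓ rim hooks equals 0. (This is proved via a sign-reversing involution σ on the set of such tabloids which modifies only the rim hook containing cell (1,1) and the rim hook containing cell (2,2).) -/

import Mathlib

open Finset

/-! ### Basic poset / graph notions -/

/-- Two elements of a poset are incomparable. -/
def Incomp {P : Type*} [PartialOrder P] (x y : P) : Prop := ¬ x ≤ y ∧ ¬ y ≤ x

/-- The incomparability graph of a poset. -/
def incompGraph (P : Type*) [PartialOrder P] : SimpleGraph P where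
  Adj x y := Incomp x y
  symm := ⟨fun _ _ h => ⟨h.2, h.1⟩⟩
  loopless := ⟨fun _ h => h.1 le_rfl⟩

/-- A poset is (3+1)-free if no induced subposet is the disjoint union of a
3-element chain and a 1-element chain. -/
def ThreeOneFree (P : Type*) [PartialOrder P] : Prop :=
  ¬ ∃ a b c x : P, a < b ∧ b < c ∧ Incomp a x ∧ Incomp b x ∧ Incomp c x

/-- A graph is clawfree if it has no induced `K_{1,3}`. -/
def Clawfree {V : Type*} (G : SimpleGraph V) : Prop :=
  ¬ ∃ c a b x : V, a ≠ b ∧ a ≠ x ∧ b ≠ x ∧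
    G.Adj c a ∧ G.Adj c b ∧ G.Adj c x ∧ ¬ G.Adj a b ∧ ¬ G.Adj a x ∧ ¬ G.Adj b x

/-! ### Orientations -/

/-- An orientation of a simple graph: each edge receives exactly one direction. -/
structure GraphOrientation {V : Type*} (G : SimpleGraph V) where
  dir : V → V → Prop
  dir_adj : ∀ u v, dir u v → G.Adj u v
  total : ∀ u v, G.Adj u v → (dir u v ↔ ¬ dir v u)

/-- An orientation is acyclic if it has no directed cycles. -/
def GraphOrientation.Acyclic {V : Type*} {G : SimpleGraph V} (o : GraphOrientation G) : Prop :=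
  ∀ v, ¬ Relation.TransGen o.dir v v

/-- A sink of an orientation: a vertex with no outgoing edges. -/
def GraphOrientation.IsSink {V : Type*} {G : SimpleGraph V} (o : GraphOrientation G) (v : V) : Prop :=
  ∀ u, ¬ o.dir v u

/-- The number of acyclic orientations of `G` with exactly `l` sinks. -/
noncomputable def numAcyclicOrientations {V : Type*} (G : SimpleGraph V) (l : ℕ) : ℕ :=
  Nat.card {o : GraphOrientation G // o.Acyclic ∧ Nat.card {v : V // o.IsSink v} = l}

/-! ### Symmetric functions as formal power series in `x_0, x_1, x_2, …` -/

/-- A proper coloring of a graph with colors in `ℕ`. -/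
def IsProperColoring {V : Type*} (G : SimpleGraph V) (κ : V → ℕ) : Prop :=
  ∀ u v, G.Adj u v → κ u ≠ κ v

/-- The chromatic symmetric function of a graph, as a formal power series:
the coefficient of the monomial `m` is the number of proper colorings of content `m`. -/
noncomputable def chromSymFun {V : Type*} [Fintype V] [DecidableEq V] (G : SimpleGraph V) :
    MvPowerSeries ℕ ℚ :=
  fun m => (Nat.card {κ : V → ℕ // IsProperColoring G κ ∧
      ∀ i : ℕ, Nat.card {v : V // κ v = i} = m i} : ℚ)

/-- The elementary symmetric function `e_k` as a power series. -/
noncomputable def esymmPS (k : ℕ) : MvPowerSeries ℕ ℚ :=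
  fun m => if (∀ i ∈ m.support, m i = 1) ∧ m.support.card = k then 1 else 0

/-- The elementary symmetric function `e_λ` attached to a partition. -/
noncomputable def elemPS {d : ℕ} (lam : Nat.Partition d) : MvPowerSeries ℕ ℚ :=
  (lam.parts.map esymmPS).prod

/-- The content of a semistandard Young tableau: the number of cells with entry `i`. -/
noncomputable def ssytContent {μ : YoungDiagram} (T : SemistandardYoungTableau μ) (i : ℕ) : ℕ :=
  Nat.card {c : ℕ × ℕ // c ∈ μ ∧ T c.1 c.2 = i}

/-- The Schur function `s_μ` as a power series: the coefficient of the monomial `m` is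
the number of semistandard Young tableaux of shape `μ` and content `m`. -/
noncomputable def schurPS (μ : YoungDiagram) : MvPowerSeries ℕ ℚ :=
  fun m => (Nat.card {T : SemistandardYoungTableau μ // ∀ i, ssytContent T i = m i} : ℚ)

/-- The Kostka number `K_{μ,ν}`: the number of semistandard Young tableaux
of shape `μ` and content the sequence `ν` (given as a list). -/
noncomputable def kostka (μ : YoungDiagram) (ν : List ℕ) : ℕ :=
  Nat.card {T : SemistandardYoungTableau μ // ∀ i, ssytContent T i = ν.getD i 0}

/-- The Young diagram of a partition. -/
def Nat.Partition.toYoung {d : ℕ} (lam : Nat.Partition d) : YoungDiagram :=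
  YoungDiagram.ofRowLens (lam.parts.sort (· ≥ ·)) (List.sortedGE_iff_pairwise.2 (Multiset.pairwise_sort ..))

/-- The hook-shaped Young diagram with `d` cells in total,
`k` of which lie in the first column. -/
def hookDiagram (d k : ℕ) : YoungDiagram :=
  YoungDiagram.ofRowLens ((d - k + 1) :: List.replicate (k - 1) 1) (by
    refine List.sortedGE_iff_pairwise.2 (List.pairwise_cons.2 ⟨?_, ?_⟩)
    · intro b hb
      rw [List.mem_replicate] at hb
      omega
    · exact List.pairwise_replicate.2 (Or.inr le_rfl))

/-! ### P-tableaux -/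

/-- A `P`-tableau of shape `μ` (Chow's convention): a filling of the cells of `μ` by the
elements of `P`, each used exactly once, strictly increasing down columns, and such that
an entry is never greater than its right neighbour. -/
structure PTableau (P : Type*) [PartialOrder P] (μ : YoungDiagram) where
  entry : ℕ → ℕ → P
  bijOn : Set.BijOn (fun c : ℕ × ℕ => entry c.1 c.2) ↑μ.cells Set.univ
  col_lt : ∀ i j, (i, j) ∈ μ → (i + 1, j) ∈ μ → entry i j < entry (i + 1) j
  row_not_gt : ∀ i j, (i, j) ∈ μ → (i, j + 1) ∈ μ → ¬ entry i (j + 1) < entry i j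

/-! ### Rim hooks and special rim hook tabloids -/

/-- Two cells are edgewise adjacent. -/
def CellAdj (a b : ℕ × ℕ) : Prop :=
  (a.1 = b.1 ∧ (a.2 = b.2 + 1 ∨ b.2 = a.2 + 1)) ∨
  (a.2 = b.2 ∧ (a.1 = b.1 + 1 ∨ b.1 = a.1 + 1))

/-- A rim hook (border strip): a nonempty, edgewise connected set of cells
containing no 2×2 square. -/
def IsRimHook (S : Finset (ℕ × ℕ)) : Prop :=
  S.Nonempty ∧
  (∀ a ∈ S, ∀ b ∈ S, Relation.ReflTransGen (fun x y => x ∈ S ∧ y ∈ S ∧ CellAdj x y) a b) ∧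
  ∀ i j : ℕ, ¬ ((i, j) ∈ S ∧ (i + 1, j) ∈ S ∧ (i, j + 1) ∈ S ∧ (i + 1, j + 1) ∈ S)

/-- A rim hook is special if it contains a cell in the first column. -/
def IsSpecial (S : Finset (ℕ × ℕ)) : Prop := ∃ i, (i, 0) ∈ S

/-- `PeelSeq μ L`: the rim hooks in the list `L` can be successively removed from `μ`,
each intermediate residue being a Young diagram, ending with the empty diagram. -/
def PeelSeq : YoungDiagram → List (Finset (ℕ × ℕ)) → Prop
  | μ, [] => μ.cells = ∅
  | μ, S :: L => ∃ ν : YoungDiagram,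
      S ⊆ μ.cells ∧ ν.cells = μ.cells \ S ∧ IsRimHook S ∧ IsSpecial S ∧ PeelSeq ν L

/-- A special rim hook tabloid of shape `μ`: a decomposition of the cells of `μ` into
disjoint special rim hooks which can be removed in some order, each intermediate residue
being a Young diagram. -/
structure SpecialRimHookTabloid (μ : YoungDiagram) where
  hooks : Finset (Finset (ℕ × ℕ))
  peelable : ∃ L : List (Finset (ℕ × ℕ)), L.Nodup ∧ L.toFinset = hooks ∧ PeelSeq μ L

/-- The height of a rim hook: the number of rows it meets. -/
def hookHeight (S : Finset (ℕ × ℕ)) : ℕ := (S.image Prod.fst).card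

/-- The sign of a special rim hook tabloid. -/
noncomputable def SpecialRimHookTabloid.sign {μ : YoungDiagram}
    (T : SpecialRimHookTabloid μ) : ℤ :=
  ∏ S ∈ T.hooks, (-1 : ℤ) ^ (hookHeight S - 1)

/-- A special rim hook tabloid has type `λ` if the multiset of sizes of its rim hooks
is the multiset of parts of `λ`. -/
def SpecialRimHookTabloid.HasType {μ : YoungDiagram} (T : SpecialRimHookTabloid μ)
    {d : ℕ} (lam : Nat.Partition d) : Prop :=
  T.hooks.val.map Finset.card = lam.parts
namespace SRHTAux

/-- helper: two naturals agree if they have the same strict lower sets -/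
lemma nat_eq_of_lt_iff {a b : ℕ} (h : ∀ j, j < a ↔ j < b) : a = b := by
  rcases Nat.lt_trichotomy a b with hab | hab | hab
  · exact absurd ((h a).mpr hab) (lt_irrefl a)
  · exact hab
  · exact absurd ((h b).mp hab) (lt_irrefl b)

lemma rowLen_pos_iff {μ : YoungDiagram} {i : ℕ} :
    0 < μ.rowLen i ↔ i < μ.colLen 0 := by
  rw [← YoungDiagram.mem_iff_lt_rowLen, YoungDiagram.mem_iff_lt_colLen]

lemma rowLen_zero_of_le {μ : YoungDiagram} {i : ℕ} (h : μ.colLen 0 ≤ i) :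
    μ.rowLen i = 0 := by
  by_contra hc
  exact absurd (rowLen_pos_iff.mp (Nat.pos_of_ne_zero hc)) (not_lt.mpr h)

lemma cells_empty_iff {μ : YoungDiagram} : μ.cells = ∅ ↔ μ.colLen 0 = 0 := by
  constructor
  · intro h
    by_contra hc
    have h0 : (0, 0) ∈ μ := YoungDiagram.mem_iff_lt_colLen.mpr (Nat.pos_of_ne_zero hc)
    rw [← YoungDiagram.mem_cells, h] at h0
    exact absurd h0 (Finset.notMem_empty _)
  · intro h
    ext ⟨i, j⟩
    simp only [Finset.notMem_empty, iff_false, YoungDiagram.mem_cells]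
    intro hm
    have := YoungDiagram.mem_iff_lt_colLen.mp (μ.up_left_mem (le_refl i) (Nat.zero_le j) hm)
    omega

/-- The special rim hook of `μ` whose topmost row is `r`. -/
def stripF (μ : YoungDiagram) (r : ℕ) : Finset (ℕ × ℕ) :=
  μ.cells.filter (fun p => r ≤ p.1 ∧ μ.rowLen (p.1 + 1) - 1 ≤ p.2)

lemma mem_stripF {μ : YoungDiagram} {r i j : ℕ} :
    (i, j) ∈ stripF μ r ↔ j < μ.rowLen i ∧ r ≤ i ∧ μ.rowLen (i + 1) - 1 ≤ j := by
  rw [stripF, Finset.mem_filter, YoungDiagram.mem_cells, YoungDiagram.mem_iff_lt_rowLen]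

/-- The residue of `μ` after removing `stripF μ r`. -/
def peelD (μ : YoungDiagram) (r : ℕ) : YoungDiagram where
  cells := μ.cells.filter (fun p => p.1 < r ∨ p.2 + 1 < μ.rowLen (p.1 + 1))
  isLowerSet := by
    rintro ⟨i1, j1⟩ ⟨i2, j2⟩ ⟨hi : i2 ≤ i1, hj : j2 ≤ j1⟩ hm
    simp only [Finset.coe_filter, Set.mem_setOf_eq, YoungDiagram.mem_cells] at hm ⊢
    obtain ⟨hmem, hcond⟩ := hm
    refine ⟨μ.up_left_mem hi hj hmem, ?_⟩
    rcases hcond with h | h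
    · exact Or.inl (lt_of_le_of_lt hi h)
    · exact Or.inr (lt_of_le_of_lt (by omega) (lt_of_lt_of_le h
        (μ.rowLen_anti _ _ (by omega))))

lemma mem_peelD {μ : YoungDiagram} {r i j : ℕ} :
    (i, j) ∈ peelD μ r ↔ j < μ.rowLen i ∧ (i < r ∨ j + 1 < μ.rowLen (i + 1)) := by
  show (i, j) ∈ (peelD μ r).cells ↔ _
  simp [peelD, Finset.mem_filter, YoungDiagram.mem_cells, YoungDiagram.mem_iff_lt_rowLen]

lemma peelD_cells {μ : YoungDiagram} {r : ℕ} :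
    (peelD μ r).cells = μ.cells \ stripF μ r := by
  ext ⟨i, j⟩
  have h1 : (i, j) ∈ (peelD μ r).cells ↔ (i, j) ∈ peelD μ r := Iff.rfl
  rw [Finset.mem_sdiff, h1, mem_peelD, YoungDiagram.mem_cells, YoungDiagram.mem_iff_lt_rowLen,
    mem_stripF]
  omega

lemma rowLen_peelD {μ : YoungDiagram} {r i : ℕ} :
    (peelD μ r).rowLen i = if i < r then μ.rowLen i else μ.rowLen (i + 1) - 1 := by
  have anti := μ.rowLen_anti i (i + 1) (by omega)
  apply nat_eq_of_lt_iff
  intro j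
  rw [← YoungDiagram.mem_iff_lt_rowLen, mem_peelD]
  split <;> rename_i h
  · constructor
    · rintro ⟨h1, _⟩; exact h1
    · intro h1; exact ⟨h1, Or.inl h⟩
  · omega

end SRHTAux
namespace SRHTAux

lemma bottom_mem_stripF {μ : YoungDiagram} {r : ℕ} (hr : r < μ.colLen 0) :
    (μ.colLen 0 - 1, 0) ∈ stripF μ r := by
  rw [mem_stripF]
  have h1 : 0 < μ.rowLen (μ.colLen 0 - 1) := rowLen_pos_iff.mpr (by omega)
  have h2 : μ.rowLen (μ.colLen 0 - 1 + 1) = 0 := rowLen_zero_of_le (by omega)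
  omega

lemma top_mem_stripF {μ : YoungDiagram} {r : ℕ} (hr : r < μ.colLen 0) :
    (r, μ.rowLen (r + 1) - 1) ∈ stripF μ r := by
  rw [mem_stripF]
  have h1 : 0 < μ.rowLen r := rowLen_pos_iff.mpr hr
  have h2 : μ.rowLen (r + 1) ≤ μ.rowLen r := μ.rowLen_anti _ _ (by omega)
  omega

lemma stripF_special {μ : YoungDiagram} {r : ℕ} (hr : r < μ.colLen 0) :
    IsSpecial (stripF μ r) :=
  ⟨_, bottom_mem_stripF hr⟩

lemma stripF_subset {μ : YoungDiagram} {r : ℕ} : stripF μ r ⊆ μ.cells :=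
  Finset.filter_subset _ _

lemma stripF_no22 {μ : YoungDiagram} {r : ℕ} (i j : ℕ) :
    ¬ ((i, j) ∈ stripF μ r ∧ (i + 1, j) ∈ stripF μ r ∧ (i, j + 1) ∈ stripF μ r ∧
      (i + 1, j + 1) ∈ stripF μ r) := by
  simp only [mem_stripF]
  omega

/-- the step relation inside a finset of cells -/
private def Rel (S : Finset (ℕ × ℕ)) (x y : ℕ × ℕ) : Prop := x ∈ S ∧ y ∈ S ∧ CellAdj x y

lemma cellAdj_symm {a b : ℕ × ℕ} (h : CellAdj a b) : CellAdj b a := by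
  rcases h with ⟨h1, h2⟩ | ⟨h1, h2⟩
  · exact Or.inl ⟨h1.symm, h2.symm⟩
  · exact Or.inr ⟨h1.symm, h2.symm⟩

lemma rel_symm {S : Finset (ℕ × ℕ)} : Symmetric (Rel S) :=
  fun _ _ h => ⟨h.2.1, h.1, cellAdj_symm h.2.2⟩

lemma path_left {μ : YoungDiagram} {r : ℕ} (i j : ℕ) :
    ∀ d, (i, j + d) ∈ stripF μ r → (i, j) ∈ stripF μ r →
      Relation.ReflTransGen (Rel (stripF μ r)) (i, j + d) (i, j) := by
  intro d
  induction d with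
  | zero => intro _ _; exact Relation.ReflTransGen.refl
  | succ d ih =>
    intro h1 h2
    have hmid : (i, j + d) ∈ stripF μ r := by
      rw [mem_stripF] at h1 h2 ⊢
      omega
    refine Relation.ReflTransGen.head ⟨h1, hmid, ?_⟩ (ih hmid h2)
    exact Or.inl ⟨rfl, Or.inl (by omega)⟩

lemma path_to_anchor {μ : YoungDiagram} {r : ℕ} :
    ∀ n i j, μ.colLen 0 - 1 - i ≤ n → (i, j) ∈ stripF μ r →
      Relation.ReflTransGen (Rel (stripF μ r)) (i, j) (μ.colLen 0 - 1, 0) := by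
  intro n
  induction n with
  | zero =>
    intro i j hn hm
    have hik : i < μ.colLen 0 := by
      have := (mem_stripF.mp hm).1
      by_contra hc
      rw [rowLen_zero_of_le (by omega)] at this
      omega
    have hieq : i = μ.colLen 0 - 1 := by omega
    subst hieq
    have h0 : (μ.colLen 0 - 1, 0) ∈ stripF μ r := by
      have h2 : μ.rowLen (μ.colLen 0 - 1 + 1) = 0 := rowLen_zero_of_le (by omega)
      rw [mem_stripF] at hm ⊢
      omega
    have := path_left (μ := μ) (r := r) (μ.colLen 0 - 1) 0 j (by simpa using hm) h0
    simpa using this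
  | succ n ih =>
    intro i j hn hm
    have hik : i < μ.colLen 0 := by
      have := (mem_stripF.mp hm).1
      by_contra hc
      rw [rowLen_zero_of_le (by omega)] at this
      omega
    by_cases hi : i = μ.colLen 0 - 1
    · exact ih i j (by omega) hm
    -- i < colLen - 1 : go left to (i, rowLen(i+1)-1), then down
    · have hm' := mem_stripF.mp hm
      set b := μ.rowLen (i + 1) - 1 with hb
      have hbm : (i, b) ∈ stripF μ r := by
        rw [mem_stripF]
        omega
      have hdown : (i + 1, b) ∈ stripF μ r := by
        rw [mem_stripF]
        have h1 : 0 < μ.rowLen (i + 1) := rowLen_pos_iff.mpr (by omega)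
        have h2 : μ.rowLen (i + 1 + 1) ≤ μ.rowLen (i + 1) := μ.rowLen_anti _ _ (by omega)
        omega
      have p1 : Relation.ReflTransGen (Rel (stripF μ r)) (i, j) (i, b) := by
        have : j = b + (j - b) := by omega
        rw [this]
        exact path_left i b (j - b) (by rw [← this]; exact hm) hbm
      have p2 : Relation.ReflTransGen (Rel (stripF μ r)) (i, b) (i + 1, b) :=
        Relation.ReflTransGen.single ⟨hbm, hdown, Or.inr ⟨rfl, Or.inr rfl⟩⟩
      exact (p1.trans p2).trans (ih (i + 1) b (by omega) hdown)

lemma stripF_rimHook {μ : YoungDiagram} {r : ℕ} (hr : r < μ.colLen 0) :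
    IsRimHook (stripF μ r) := by
  refine ⟨⟨_, bottom_mem_stripF hr⟩, ?_, stripF_no22⟩
  intro a ha b hb
  have h1 : Relation.ReflTransGen (Rel (stripF μ r)) a (μ.colLen 0 - 1, 0) :=
    path_to_anchor _ a.1 a.2 le_rfl (by simpa using ha)
  have h2 : Relation.ReflTransGen (Rel (stripF μ r)) b (μ.colLen 0 - 1, 0) :=
    path_to_anchor _ b.1 b.2 le_rfl (by simpa using hb)
  haveI : Std.Symm (Rel (stripF μ r)) := ⟨fun _ _ h => rel_symm h⟩
  exact h1.trans (Std.Symm.symm _ _ h2)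

lemma image_fst_stripF {μ : YoungDiagram} {r : ℕ} (hr : r < μ.colLen 0) :
    (stripF μ r).image Prod.fst = Finset.Ico r (μ.colLen 0) := by
  ext i
  simp only [Finset.mem_image, Finset.mem_Ico]
  constructor
  · rintro ⟨⟨i', j⟩, hm, rfl⟩
    have h := mem_stripF.mp hm
    have : i' < μ.colLen 0 := by
      by_contra hc
      rw [rowLen_zero_of_le (by omega)] at h
      omega
    exact ⟨h.2.1, this⟩
  · rintro ⟨h1, h2⟩
    refine ⟨(i, μ.rowLen (i + 1) - 1), ?_, rfl⟩
    rw [mem_stripF]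
    have hp : 0 < μ.rowLen i := rowLen_pos_iff.mpr h2
    have := μ.rowLen_anti i (i + 1) (by omega)
    omega

lemma hookHeight_stripF {μ : YoungDiagram} {r : ℕ} (hr : r < μ.colLen 0) :
    hookHeight (stripF μ r) = μ.colLen 0 - r := by
  rw [hookHeight, image_fst_stripF hr, Nat.card_Ico]

lemma stripF_injOn {μ : YoungDiagram} {r r' : ℕ} (hr : r < μ.colLen 0)
    (hr' : r' < μ.colLen 0) (h : stripF μ r = stripF μ r') : r = r' := by
  have h1 := top_mem_stripF (μ := μ) hr
  have h2 := top_mem_stripF (μ := μ) hr'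
  rw [h] at h1; rw [← h] at h2
  have := (mem_stripF.mp h1).2.1
  have := (mem_stripF.mp h2).2.1
  omega

end SRHTAux
namespace SRHTAux

section Classify

variable {μ ν : YoungDiagram} {S : Finset (ℕ × ℕ)}

lemma exists_row_of_path {a b : ℕ × ℕ}
    (hab : Relation.ReflTransGen (Rel S) a b) (ha : a ∈ S) :
    ∀ i, a.1 ≤ i → i ≤ b.1 → ∃ j, (i, j) ∈ S := by
  induction hab with
  | refl =>
    intro i h1 h2
    exact ⟨a.2, by have : i = a.1 := le_antisymm h2 h1; rw [this, Prod.mk.eta]; exact ha⟩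
  | @tail b c h step ih =>
    intro i h1 h2
    by_cases hib : i ≤ b.1
    · exact ih i h1 hib
    · have hc1 : c.1 ≤ b.1 + 1 := by
        rcases step.2.2 with ⟨h', _⟩ | ⟨_, h' | h'⟩ <;> omega
      have : i = c.1 := by omega
      exact ⟨c.2, by rw [this, Prod.mk.eta]; exact step.2.1⟩

lemma exists_cross_of_path {a b : ℕ × ℕ}
    (hab : Relation.ReflTransGen (Rel S) a b) :
    ∀ i, a.1 ≤ i → i < b.1 → ∃ j, (i, j) ∈ S ∧ (i + 1, j) ∈ S := by
  induction hab with
  | refl => intro i h1 h2; omega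
  | @tail b c h step ih =>
    intro i h1 h2
    by_cases hib : i < b.1
    · exact ih i h1 hib
    · rcases step.2.2 with ⟨h', _⟩ | ⟨h', hv⟩
      · omega
      · rcases hv with hv | hv
        · omega
        · have hi : i = b.1 := by omega
          refine ⟨b.2, by rw [hi, Prod.mk.eta]; exact step.1, ?_⟩
          have : (i + 1, b.2) = c := by
            rw [hi, ← hv, h']
          rw [this]
          exact step.2.1

lemma classify (hsub : S ⊆ μ.cells) (hν : ν.cells = μ.cells \ S)
    (hRH : IsRimHook S) (hSp : IsSpecial S) :
    ∃ r, r < μ.colLen 0 ∧ S = stripF μ r ∧ ν = peelD μ r := by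
  obtain ⟨hne, hconn, h22⟩ := hRH
  obtain ⟨i0, hi0⟩ := hSp
  -- membership criterion
  have hS' : ∀ i j : ℕ, (i, j) ∈ S ↔ ν.rowLen i ≤ j ∧ j < μ.rowLen i := by
    intro i j
    have hμ : (i, j) ∈ μ.cells ↔ j < μ.rowLen i := by
      rw [YoungDiagram.mem_cells, YoungDiagram.mem_iff_lt_rowLen]
    have hν' : (i, j) ∈ ν.cells ↔ j < ν.rowLen i := by
      rw [YoungDiagram.mem_cells, YoungDiagram.mem_iff_lt_rowLen]
    constructor
    · intro h
      have h1 : (i, j) ∈ μ.cells := hsub h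
      have h2 : (i, j) ∉ ν.cells := by
        rw [hν, Finset.mem_sdiff]
        tauto
      rw [hμ] at h1
      rw [hν'] at h2
      omega
    · rintro ⟨h1, h2⟩
      have h3 : (i, j) ∈ μ.cells := hμ.mpr h2
      by_contra hc
      have : (i, j) ∈ ν.cells := by
        rw [hν, Finset.mem_sdiff]; exact ⟨h3, hc⟩
      rw [hν'] at this
      omega
  have hgf : ∀ i, ν.rowLen i ≤ μ.rowLen i := by
    intro i
    by_contra hc
    have : (i, μ.rowLen i) ∈ ν.cells := by
      rw [YoungDiagram.mem_cells, YoungDiagram.mem_iff_lt_rowLen]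
      omega
    rw [hν, Finset.mem_sdiff, YoungDiagram.mem_cells, YoungDiagram.mem_iff_lt_rowLen] at this
    omega
  have hganti : ∀ i, ν.rowLen (i + 1) ≤ ν.rowLen i := fun i => ν.rowLen_anti i (i + 1) (by omega)
  have hfanti : ∀ i, μ.rowLen (i + 1) ≤ μ.rowLen i := fun i => μ.rowLen_anti i (i + 1) (by omega)
  have hrowK : ∀ i j, (i, j) ∈ S → i < μ.colLen 0 := by
    intro i j hij
    have := (hS' i j).mp hij
    by_contra hc
    have : μ.rowLen i = 0 := rowLen_zero_of_le (by omega)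
    omega
  -- min and max occupied rows
  obtain ⟨r, ⟨jr, hjr⟩, hrmin⟩ :
      ∃ r, (∃ j, (r, j) ∈ S) ∧ ∀ i j, (i, j) ∈ S → r ≤ i := by
    have hine : (S.image Prod.fst).Nonempty := hne.image _
    refine ⟨(S.image Prod.fst).min' hine, ?_, ?_⟩
    · have := (S.image Prod.fst).min'_mem hine
      rw [Finset.mem_image] at this
      obtain ⟨a, ha, he⟩ := this
      exact ⟨a.2, by rw [← he, Prod.mk.eta]; exact ha⟩
    · intro i j hij
      exact Finset.min'_le _ _ (Finset.mem_image.mpr ⟨(i, j), hij, rfl⟩)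
  obtain ⟨rmax, ⟨jm, hjm⟩, hrmax⟩ :
      ∃ rM, (∃ j, (rM, j) ∈ S) ∧ ∀ i j, (i, j) ∈ S → i ≤ rM := by
    have hine : (S.image Prod.fst).Nonempty := hne.image _
    refine ⟨(S.image Prod.fst).max' hine, ?_, ?_⟩
    · have := (S.image Prod.fst).max'_mem hine
      rw [Finset.mem_image] at this
      obtain ⟨a, ha, he⟩ := this
      exact ⟨a.2, by rw [← he, Prod.mk.eta]; exact ha⟩
    · intro i j hij
      exact Finset.le_max' (S.image Prod.fst) i (Finset.mem_image.mpr ⟨(i, j), hij, rfl⟩)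
  -- cross columns: for r ≤ i < rmax, ν.rowLen i = μ.rowLen (i+1) - 1
  have hcross : ∀ i, r ≤ i → i < rmax → ν.rowLen i = μ.rowLen (i + 1) - 1 := by
    intro i h1 h2
    have hpath := hconn (r, jr) hjr (rmax, jm) hjm
    obtain ⟨j, hj1, hj2⟩ := exists_cross_of_path hpath i h1 h2
    have e1 := (hS' i j).mp hj1
    have e2 := (hS' (i + 1) j).mp hj2
    have hno := h22 i (ν.rowLen i)
    by_contra hc
    apply hno
    have hgi := hganti i
    have hfi := hfanti i
    exact ⟨(hS' _ _).mpr (by omega), (hS' _ _).mpr (by omega),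
      (hS' _ _).mpr (by omega), (hS' _ _).mpr (by omega)⟩
  -- i0 facts
  have hgi0 : ν.rowLen i0 = 0 := by
    have := (hS' i0 0).mp hi0
    omega
  have hi0r : r ≤ i0 := hrmin _ _ hi0
  have hi0m : i0 ≤ rmax := hrmax _ _ hi0
  have hK0 : i0 < μ.colLen 0 := hrowK _ _ hi0
  -- rmax = colLen - 1
  have hrmaxK : rmax = μ.colLen 0 - 1 := by
    have h1 : rmax < μ.colLen 0 := hrowK _ _ hjm
    by_contra hc
    have h2 : rmax + 1 < μ.colLen 0 := by omega
    have h3 : 0 < μ.rowLen (rmax + 1) := rowLen_pos_iff.mpr h2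
    have h4 : ν.rowLen (rmax + 1) ≥ μ.rowLen (rmax + 1) := by
      by_contra hc2
      have h5 := hrmax (rmax + 1) (ν.rowLen (rmax + 1)) ((hS' _ _).mpr (by omega))
      omega
    have h5 : ν.rowLen (rmax + 1) ≤ ν.rowLen i0 := ν.rowLen_anti i0 (rmax + 1) (by omega)
    omega
  -- the complete description of ν.rowLen
  have hg : ∀ i, ν.rowLen i = if i < r then μ.rowLen i else μ.rowLen (i + 1) - 1 := by
    intro i
    split <;> rename_i hcase
    · have h1 : ν.rowLen i ≥ μ.rowLen i := by
        by_contra hc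
        have := hrmin i (ν.rowLen i) ((hS' _ _).mpr (by omega))
        omega
      have := hgf i
      omega
    · push_neg at hcase
      by_cases hik : i < μ.colLen 0 - 1
      · exact hcross i hcase (by omega)
      · by_cases hik2 : i = μ.colLen 0 - 1
        · have h1 : ν.rowLen i ≤ ν.rowLen i0 := ν.rowLen_anti i0 i (by omega)
          have h2 : μ.rowLen (i + 1) = 0 := rowLen_zero_of_le (by omega)
          omega
        · have h1 : μ.rowLen i = 0 := rowLen_zero_of_le (by omega)
          have h2 : μ.rowLen (i + 1) = 0 := rowLen_zero_of_le (by omega)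
          have := hgf i
          omega
  have hrK : r < μ.colLen 0 := by omega
  have hSstrip : S = stripF μ r := by
    ext ⟨i, j⟩
    rw [hS' i j, mem_stripF, hg i]
    split <;> rename_i hcase
    · omega
    · push_neg at hcase
      have := hfanti i
      omega
  refine ⟨r, hrK, hSstrip, ?_⟩
  apply YoungDiagram.ext
  rw [hν, peelD_cells, hSstrip]

end Classify

end SRHTAux
namespace SRHTAux

open scoped Classical in
/-- All special rim hook tabloids of shape `μ` with `l` hooks, as finsets of hooks. -/
noncomputable def tabFinset (μ : YoungDiagram) (l : ℕ) : Finset (Finset (Finset (ℕ × ℕ))) :=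
  (μ.cells.powerset.powerset).filter
    (fun H => H.card = l ∧ ∃ L : List (Finset (ℕ × ℕ)), L.Nodup ∧ L.toFinset = H ∧ PeelSeq μ L)

noncomputable def signH (H : Finset (Finset (ℕ × ℕ))) : ℤ :=
  ∏ S ∈ H, (-1 : ℤ) ^ (hookHeight S - 1)

noncomputable def E (μ : YoungDiagram) (l : ℕ) : ℤ := ∑ H ∈ tabFinset μ l, signH H

lemma peelseq_subset : ∀ (L : List (Finset (ℕ × ℕ))) (μ : YoungDiagram),
    PeelSeq μ L → ∀ S ∈ L, S ⊆ μ.cells := by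
  intro L
  induction L with
  | nil => intro μ _ S hS; exact absurd hS List.not_mem_nil
  | cons S0 L ih =>
    intro μ hp S hS
    obtain ⟨ν, hsub, hcells, _, _, hL⟩ := hp
    rcases List.mem_cons.mp hS with rfl | hS
    · exact hsub
    · intro x hx
      have := ih ν hL S hS hx
      rw [hcells, Finset.mem_sdiff] at this
      exact this.1

lemma mem_tabFinset {μ : YoungDiagram} {l : ℕ} {H : Finset (Finset (ℕ × ℕ))} :
    H ∈ tabFinset μ l ↔
      H.card = l ∧ ∃ L : List (Finset (ℕ × ℕ)), L.Nodup ∧ L.toFinset = H ∧ PeelSeq μ L := by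
  classical
  rw [tabFinset]
  simp only [Finset.mem_filter, Finset.mem_powerset, and_iff_right_iff_imp]
  rintro ⟨hcard, L, hnd, hLH, hps⟩
  intro S hS
  rw [Finset.mem_powerset]
  exact peelseq_subset L μ hps S (by rw [← hLH] at hS; exact List.mem_toFinset.mp hS)

lemma bottom_not_mem_peelD {μ : YoungDiagram} {r : ℕ} (hr : r < μ.colLen 0) :
    (μ.colLen 0 - 1, 0) ∉ (peelD μ r).cells := by
  rw [peelD_cells, Finset.mem_sdiff]
  intro h
  exact h.2 (bottom_mem_stripF hr)

lemma stripF_not_mem {μ : YoungDiagram} {r : ℕ} (hr : r < μ.colLen 0)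
    {H : Finset (Finset (ℕ × ℕ))} (hH : ∀ S ∈ H, S ⊆ (peelD μ r).cells) :
    stripF μ r ∉ H := by
  intro hmem
  exact bottom_not_mem_peelD hr (hH _ hmem (bottom_mem_stripF hr))

lemma tab_subsets {μ : YoungDiagram} {l : ℕ} {H : Finset (Finset (ℕ × ℕ))}
    (h : H ∈ tabFinset μ l) : ∀ S ∈ H, S ⊆ μ.cells := by
  obtain ⟨hcard, L, hnd, hLH, hps⟩ := mem_tabFinset.mp h
  intro S hS
  exact peelseq_subset L μ hps S (by rw [← hLH] at hS; exact List.mem_toFinset.mp hS)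

lemma E_succ (μ : YoungDiagram) (l : ℕ) :
    E μ (l + 1) = ∑ r ∈ Finset.range (μ.colLen 0),
      (-1 : ℤ) ^ (μ.colLen 0 - r - 1) * E (peelD μ r) l := by
  classical
  have step1 : E μ (l + 1) = ∑ p ∈ (Finset.range (μ.colLen 0)).sigma
      (fun r => tabFinset (peelD μ r) l),
      (-1 : ℤ) ^ (μ.colLen 0 - p.1 - 1) * signH p.2 := by
    show ∑ H ∈ tabFinset μ (l + 1), signH H = _
    refine (Finset.sum_bij
      (fun (p : Σ _ : ℕ, Finset (Finset (ℕ × ℕ))) _ => insert (stripF μ p.1) p.2)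
      ?_ ?_ ?_ ?_).symm
    · -- maps into tabFinset μ (l+1)
      rintro ⟨r, H⟩ hp
      rw [Finset.mem_sigma, Finset.mem_range] at hp
      obtain ⟨hr, hH⟩ := hp
      dsimp only at hr hH ⊢
      obtain ⟨hcard, L', hnd, hLH, hps⟩ := mem_tabFinset.mp hH
      have hsubs := tab_subsets hH
      have hnotmem : stripF μ r ∉ H := stripF_not_mem hr hsubs
      rw [mem_tabFinset]
      refine ⟨by rw [Finset.card_insert_of_notMem hnotmem, hcard], stripF μ r :: L', ?_, ?_, ?_⟩
      · refine List.nodup_cons.mpr ⟨?_, hnd⟩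
        intro hmem
        exact hnotmem (by rw [← hLH]; exact List.mem_toFinset.mpr hmem)
      · rw [List.toFinset_cons, hLH]
      · exact ⟨peelD μ r, stripF_subset, peelD_cells, stripF_rimHook hr, stripF_special hr, hps⟩
    · -- injective
      rintro ⟨r, H⟩ hp ⟨r', H'⟩ hp' heq
      rw [Finset.mem_sigma, Finset.mem_range] at hp hp'
      obtain ⟨hr, hH⟩ := hp
      obtain ⟨hr', hH'⟩ := hp'
      dsimp only at hr hH hr' hH' heq ⊢
      have hne : stripF μ r ∉ H := stripF_not_mem hr (tab_subsets hH)
      have hne' : stripF μ r' ∉ H' := stripF_not_mem hr' (tab_subsets hH')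
      have hrr : r = r' := by
        apply stripF_injOn hr hr'
        have h1 : stripF μ r ∈ insert (stripF μ r') H' := by
          rw [← heq]; exact Finset.mem_insert_self _ _
        rcases Finset.mem_insert.mp h1 with h | h
        · exact h
        · exact absurd (tab_subsets hH' _ h (bottom_mem_stripF hr))
            (by rw [peelD_cells, Finset.mem_sdiff]; intro hx; exact hx.2 (bottom_mem_stripF hr'))
      subst hrr
      have hHH : H = H' := by
        have h1 : (insert (stripF μ r) H).erase (stripF μ r)
            = (insert (stripF μ r) H').erase (stripF μ r) := by rw [heq]
        rwa [Finset.erase_insert hne, Finset.erase_insert hne'] at h1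
      rw [hHH]
    · -- surjective
      intro H hH
      obtain ⟨hcard, L, hnd, hLH, hps⟩ := mem_tabFinset.mp hH
      match L, hnd, hLH, hps with
      | [], hnd, hLH, hps =>
        exfalso
        rw [← hLH] at hcard
        simp at hcard
      | S :: L', hnd, hLH, hps =>
        obtain ⟨ν, hsub, hcells, hRH, hSp, hL'⟩ := hps
        obtain ⟨r, hr, hSstrip, hνeq⟩ := classify hsub hcells hRH hSp
        subst hνeq
        have hnd' := List.nodup_cons.mp hnd
        refine ⟨⟨r, L'.toFinset⟩, ?_, ?_⟩
        · rw [Finset.mem_sigma, Finset.mem_range]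
          dsimp only
          rw [mem_tabFinset]
          have hScard : S ∉ L'.toFinset := fun hc => hnd'.1 (List.mem_toFinset.mp hc)
          refine ⟨hr, ?_, L', hnd'.2, rfl, hL'⟩
          have hc2 : H.card = L'.toFinset.card + 1 := by
            rw [← hLH, List.toFinset_cons, Finset.card_insert_of_notMem hScard]
          omega
        · show insert (stripF μ r) L'.toFinset = H
          rw [← hLH, List.toFinset_cons, hSstrip]
    · -- values
      rintro ⟨r, H⟩ hp
      rw [Finset.mem_sigma, Finset.mem_range] at hp
      obtain ⟨hr, hH⟩ := hp
      dsimp only at hr hH ⊢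
      have hnotmem : stripF μ r ∉ H := stripF_not_mem hr (tab_subsets hH)
      have hins : signH (insert (stripF μ r) H)
          = (-1 : ℤ) ^ (hookHeight (stripF μ r) - 1) * signH H :=
        Finset.prod_insert hnotmem
      rw [hins, hookHeight_stripF hr]
  rw [step1, Finset.sum_sigma]
  refine Finset.sum_congr rfl fun r _ => ?_
  dsimp only
  exact (Finset.mul_sum _ _ _).symm

end SRHTAux
namespace SRHTAux

lemma tabFinset_zero_of_empty {μ : YoungDiagram} (h : μ.cells = ∅) :
    tabFinset μ 0 = {∅} := by
  ext H
  rw [mem_tabFinset, Finset.mem_singleton]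
  constructor
  · rintro ⟨hcard, -⟩
    exact Finset.card_eq_zero.mp hcard
  · rintro rfl
    exact ⟨Finset.card_empty, [], List.nodup_nil, rfl, h⟩

lemma E_empty_zero {μ : YoungDiagram} (h : μ.cells = ∅) : E μ 0 = 1 := by
  rw [E, tabFinset_zero_of_empty h, Finset.sum_singleton, signH, Finset.prod_empty]

lemma E_zero_of_nonempty {μ : YoungDiagram} (h : μ.cells ≠ ∅) : E μ 0 = 0 := by
  rw [E]
  convert Finset.sum_empty
  ext H
  rw [mem_tabFinset]
  simp only [Finset.notMem_empty, iff_false]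
  rintro ⟨hcard, L, hnd, hLH, hps⟩
  have hH : H = ∅ := Finset.card_eq_zero.mp hcard
  subst hH
  have : L = [] := List.toFinset_eq_empty_iff L |>.mp hLH
  subst this
  exact h hps

lemma colLen_eq_of_lt_iff {μ : YoungDiagram} {m : ℕ}
    (h : ∀ i, 0 < μ.rowLen i ↔ i < m) : μ.colLen 0 = m :=
  nat_eq_of_lt_iff (fun i => (rowLen_pos_iff (μ := μ) (i := i)).symm.trans (h i))

lemma colLen_peelD_of_hook {μ : YoungDiagram} {r : ℕ} (hhook : μ.rowLen 1 ≤ 1)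
    (hr : r < μ.colLen 0) : (peelD μ r).colLen 0 = r := by
  apply colLen_eq_of_lt_iff
  intro i
  rw [rowLen_peelD]
  split <;> rename_i hcase
  · simp only [iff_true_intro hcase, iff_true]
    exact rowLen_pos_iff.mpr (by omega)
  · have h1 : μ.rowLen (i + 1) ≤ μ.rowLen 1 := μ.rowLen_anti 1 (i + 1) (by omega)
    omega

lemma rowLen_one_peelD_le {μ : YoungDiagram} {r : ℕ} (hhook : μ.rowLen 1 ≤ 1) :
    (peelD μ r).rowLen 1 ≤ 1 := by
  rw [rowLen_peelD]
  have h1 : μ.rowLen (1 + 1) ≤ μ.rowLen 1 := μ.rowLen_anti 1 (1 + 1) (by omega)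
  split <;> omega

/-- The signed count for a hook shape depends only on the number of rows. -/
lemma E_hook : ∀ (l : ℕ) (μ μ' : YoungDiagram), μ.rowLen 1 ≤ 1 → μ'.rowLen 1 ≤ 1 →
    μ.colLen 0 = μ'.colLen 0 → E μ l = E μ' l := by
  intro l
  induction l with
  | zero =>
    intro μ μ' h1 h1' hcol
    by_cases hk : μ.colLen 0 = 0
    · rw [E_empty_zero (cells_empty_iff.mpr hk),
        E_empty_zero (cells_empty_iff.mpr (hcol ▸ hk))]
    · rw [E_zero_of_nonempty (fun hc => hk (cells_empty_iff.mp hc)),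
        E_zero_of_nonempty (fun hc => hk (hcol ▸ cells_empty_iff.mp hc))]
  | succ l ih =>
    intro μ μ' h1 h1' hcol
    rw [E_succ, E_succ, hcol]
    refine Finset.sum_congr rfl fun r hr => ?_
    rw [Finset.mem_range] at hr
    congr 1
    refine ih _ _ (rowLen_one_peelD_le h1) (rowLen_one_peelD_le h1') ?_
    rw [colLen_peelD_of_hook h1 (by omega), colLen_peelD_of_hook h1' hr]

lemma card_peelD_lt {μ : YoungDiagram} {r : ℕ} (hr : r < μ.colLen 0) :
    (peelD μ r).cells.card < μ.cells.card := by
  rw [peelD_cells]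
  exact Finset.card_lt_card
    (Finset.sdiff_ssubset stripF_subset ⟨_, bottom_mem_stripF hr⟩)

end SRHTAux
namespace SRHTAux

lemma E_vanish : ∀ (n : ℕ) (μ : YoungDiagram), μ.cells.card ≤ n → (1, 1) ∈ μ →
    ∀ l : ℕ, E μ (l + 1) = 0 := by
  intro n
  induction n with
  | zero =>
    intro μ hcard h22 l
    exfalso
    have : (1, 1) ∈ μ.cells := (YoungDiagram.mem_cells _).mpr h22
    have := Finset.card_pos.mpr ⟨_, this⟩
    omega
  | succ n ih =>
    intro μ hcard h22 l
    have hf1 : 2 ≤ μ.rowLen 1 := YoungDiagram.mem_iff_lt_rowLen.mp h22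
    have hf0 : 2 ≤ μ.rowLen 0 := le_trans hf1 (μ.rowLen_anti 0 1 (by omega))
    have hK : 2 ≤ μ.colLen 0 := by
      have h1 : 1 < μ.colLen 1 := YoungDiagram.mem_iff_lt_colLen.mp h22
      have h2 : μ.colLen 1 ≤ μ.colLen 0 := μ.colLen_anti 0 1 (by omega)
      omega
    -- any residue containing (1,1) contributes 0
    have hterm : ∀ r, r < μ.colLen 0 → (1, 1) ∈ peelD μ r → E (peelD μ r) l = 0 := by
      intro r hr hmem
      cases l with
      | zero =>
        exact E_zero_of_nonempty
          (Finset.ne_empty_of_mem ((YoungDiagram.mem_cells _).mpr hmem))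
      | succ l' =>
        refine ih (peelD μ r) ?_ hmem l'
        have := card_peelD_lt hr
        omega
    rw [E_succ]
    by_cases hf2 : 3 ≤ μ.rowLen 2
    · -- all residues contain (1,1)
      refine Finset.sum_eq_zero fun r hr => ?_
      rw [Finset.mem_range] at hr
      have hmem : (1, 1) ∈ peelD μ r := by
        rw [mem_peelD]
        refine ⟨by omega, ?_⟩
        rcases Nat.lt_or_ge 1 r with h | h
        · exact Or.inl h
        · refine Or.inr ?_
          have h9 : μ.rowLen (1 + 1) = μ.rowLen 2 := rfl
          omega
      rw [hterm r hr hmem, mul_zero]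
    · -- the two surviving hook residues cancel
      push_neg at hf2
      have hA : (peelD μ 0).rowLen 1 ≤ 1 := by
        rw [rowLen_peelD, if_neg (by omega : ¬ (1 : ℕ) < 0)]
        have h9 : μ.rowLen (1 + 1) = μ.rowLen 2 := rfl
        omega
      have hB : (peelD μ 1).rowLen 1 ≤ 1 := by
        rw [rowLen_peelD, if_neg (lt_irrefl 1)]
        have h9 : μ.rowLen (1 + 1) = μ.rowLen 2 := rfl
        omega
      have hcol : (peelD μ 0).colLen 0 = (peelD μ 1).colLen 0 := by
        apply nat_eq_of_lt_iff
        intro i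
        rw [← rowLen_pos_iff, ← rowLen_pos_iff, rowLen_peelD, rowLen_peelD]
        rcases Nat.eq_zero_or_pos i with rfl | hi
        · rw [if_neg (lt_irrefl 0), if_pos Nat.zero_lt_one]
          have h9 : μ.rowLen (0 + 1) = μ.rowLen 1 := rfl
          omega
        · have h1 : ¬ i < 0 := by omega
          have h2 : ¬ i < 1 := by omega
          rw [if_neg h1, if_neg h2]
      have hc01 : E (peelD μ 0) l = E (peelD μ 1) l := E_hook l _ _ hA hB hcol
      have hsub : ({0, 1} : Finset ℕ) ⊆ Finset.range (μ.colLen 0) := by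
        intro x hx
        rw [Finset.mem_insert, Finset.mem_singleton] at hx
        rw [Finset.mem_range]
        omega
      rw [← Finset.sum_subset hsub ?_]
      · rw [Finset.sum_pair (by norm_num : (0 : ℕ) ≠ 1), hc01]
        obtain ⟨k, hk⟩ : ∃ k, μ.colLen 0 = k + 2 := ⟨μ.colLen 0 - 2, by omega⟩
        rw [hk]
        have e1 : k + 2 - 0 - 1 = k + 1 := by omega
        have e2 : k + 2 - 1 - 1 = k := by omega
        rw [e1, e2, pow_succ]
        ring
      · intro x hx hnx
        rw [Finset.mem_range] at hx
        rw [Finset.mem_insert, Finset.mem_singleton] at hnx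
        push_neg at hnx
        have hmem : (1, 1) ∈ peelD μ x := by
          rw [mem_peelD]
          exact ⟨by omega, Or.inl (by omega)⟩
        rw [hterm x hx hmem, mul_zero]

noncomputable def tabEquiv (μ : YoungDiagram) (l : ℕ) :
    {T : SpecialRimHookTabloid μ // T.hooks.card = l} ≃ {H // H ∈ tabFinset μ l} where
  toFun T := ⟨T.1.hooks, mem_tabFinset.mpr ⟨T.2, T.1.peelable⟩⟩
  invFun H := ⟨⟨H.1, (mem_tabFinset.mp H.2).2⟩, (mem_tabFinset.mp H.2).1⟩
  left_inv T := by
    obtain ⟨⟨hooks, hpeel⟩, hcard⟩ := T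
    rfl
  right_inv H := by
    obtain ⟨H, hH⟩ := H
    rfl

end SRHTAux


/-- If `μ` is a partition that is not a hook (i.e. its Ferrers diagram contains the cell
`(2,2)`, which in 0-indexed coordinates is `(1,1)`), then for every `ℓ ≥ 1` the signed sum
over all special rim hook tabloids of shape `μ` with exactly `ℓ` rim hooks vanishes. -/
theorem signed_sum_vanishes_of_not_hook
    (μ : YoungDiagram) (h22 : (1, 1) ∈ μ) (l : ℕ) (hl : 1 ≤ l) :
    ∑ᶠ T : {T : SpecialRimHookTabloid μ // T.hooks.card = l}, T.val.sign = 0 := by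
  classical
  haveI : Fintype {T : SpecialRimHookTabloid μ // T.hooks.card = l} :=
    Fintype.ofEquiv _ (SRHTAux.tabEquiv μ l).symm
  rw [finsum_eq_sum_of_fintype]
  have h1 : ∑ T : {T : SpecialRimHookTabloid μ // T.hooks.card = l}, T.val.sign
      = ∑ H : {H // H ∈ SRHTAux.tabFinset μ l}, SRHTAux.signH H.1 :=
    Fintype.sum_equiv (SRHTAux.tabEquiv μ l) _ _ (fun T => rfl)
  have h2 : ∑ H : {H // H ∈ SRHTAux.tabFinset μ l}, SRHTAux.signH H.1
      = ∑ H ∈ SRHTAux.tabFinset μ l, SRHTAux.signH H :=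
    Finset.sum_coe_sort (SRHTAux.tabFinset μ l) SRHTAux.signH
  rw [h1, h2]
  show SRHTAux.E μ l = 0
  obtain ⟨l', rfl⟩ : ∃ l', l = l' + 1 := ⟨l - 1, by omega⟩
  exact SRHTAux.E_vanish μ.cells.card μ le_rfl h22 l'
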